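/- Assume H is connected, every vertex lies in at least one hyperedge, ∑_{v∈V} s_v = 0, and r∈ℝ^E with r_e ≥ 0 for all e. Suppose π∈ℝ^{V↑} satisfies π_v − π_{e⁺} ≤ 0 and π_{e⁻} − π_v ≤ 0 for every incidence v∈e, π_{e⁺} − π_{e⁻} ≤ r_e for every e∈E, and ∑_{v∈V} s_v π_v = L_s(r). Then the vector x∈ℝ^V defined by x_v = π_v − (∑_{u∈V} d_u π_u)/(∑_{u∈V} d_u) lies in 𝓧₀, satisfies R_e(x) ≤ r_e for every e∈E, and ⟨s,x⟩ = L_s(r); in particular, x is an optimal solution of the support maximization problem defining L_s(r). -/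

import Mathlib

open Finset

section

variable {V : Type*} [Fintype V] [DecidableEq V] [Nonempty V]
variable {E : Type*} [Fintype E]

/-- The edge range `R_e(x) = max_{u∈e} x_u - min_{v∈e} x_v`. -/
noncomputable def eRange (edge : E → Finset V) (hne : ∀ e, (edge e).Nonempty)
    (x : V → ℝ) (e : E) : ℝ :=
  (edge e).sup' (hne e) x - (edge e).inf' (hne e) x

/-- Weighted degree `d_v = ∑_{e ∋ v} w_e`. -/
noncomputable def degw (edge : E → Finset V) (w : E → ℝ) (v : V) : ℝ :=
  ∑ e ∈ univ.filter (fun e => v ∈ edge e), w e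

/-- Membership in `𝓧₀`: weighted zero-mean. -/
def memX0 (edge : E → Finset V) (w : E → ℝ) (x : V → ℝ) : Prop :=
  ∑ v, degw edge w v * x v = 0

/-- Connectivity of the hypergraph. -/
def HConn (edge : E → Finset V) : Prop :=
  ∀ u v : V, ∃ (k : ℕ) (p : Fin (k + 1) → V) (c : Fin k → E),
    p 0 = u ∧ p (Fin.last k) = v ∧
    ∀ i : Fin k, p i.castSucc ∈ edge (c i) ∧ p i.succ ∈ edge (c i)

/-- The support value `L_s(r)`, as a supremum. -/
noncomputable def suppVal (edge : E → Finset V) (hne : ∀ e, (edge e).Nonempty)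
    (w : E → ℝ) (s : V → ℝ) (r : E → ℝ) : ℝ :=
  sSup {c : ℝ | ∃ x : V → ℝ, memX0 edge w x ∧
    (∀ e, eRange edge hne x e ≤ r e) ∧ c = ∑ v, s v * x v}

private lemma nat_path_bound (f : ℕ → ℝ) (R : ℝ) (k : ℕ)
    (h : ∀ i < k, |f (i + 1) - f i| ≤ R) : |f k - f 0| ≤ k * R := by
  induction k with
  | zero => simp
  | succ n ih =>
    have h1 := ih (fun i hi => h i (by omega))
    have h2 := h n (by omega)
    have h3 : |f (n + 1) - f 0| ≤ |f (n + 1) - f n| + |f n - f 0| := abs_sub_le _ _ _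
    push_cast
    nlinarith

theorem stmt10 (edge : E → Finset V) (hne : ∀ e, (edge e).Nonempty)
    (w : E → ℝ) (hw : ∀ e, 0 < w e) (s : V → ℝ) (r : E → ℝ)
    (hconn : HConn edge) (hcov : ∀ v : V, ∃ e, v ∈ edge e)
    (hs : ∑ v, s v = 0) (hr : ∀ e, 0 ≤ r e)
    (piV : V → ℝ) (pip pim : E → ℝ)
    (h1 : ∀ e, ∀ v ∈ edge e, piV v - pip e ≤ 0)
    (h2 : ∀ e, ∀ v ∈ edge e, pim e - piV v ≤ 0)
    (h3 : ∀ e, pip e - pim e ≤ r e)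
    (h4 : ∑ v, s v * piV v = suppVal edge hne w s r) :
    let x : V → ℝ := fun v => piV v - (∑ u, degw edge w u * piV u) / (∑ u, degw edge w u)
    memX0 edge w x ∧
    (∀ e, eRange edge hne x e ≤ r e) ∧
    (∑ v, s v * x v = suppVal edge hne w s r) ∧
    (∀ y : V → ℝ, memX0 edge w y → (∀ e, eRange edge hne y e ≤ r e) →
      ∑ v, s v * y v ≤ ∑ v, s v * x v) := by
  intro x
  -- positivity of degrees
  have hdpos : ∀ v, 0 < degw edge w v := by
    intro v
    obtain ⟨e, he⟩ := hcov v
    exact Finset.sum_pos (fun e' _ => hw e')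
      ⟨e, by simp [he]⟩
  have hDpos : 0 < ∑ u, degw edge w u :=
    Finset.sum_pos (fun v _ => hdpos v) ⟨Classical.arbitrary V, mem_univ _⟩
  have hDne : (∑ u, degw edge w u) ≠ 0 := ne_of_gt hDpos
  set c : ℝ := (∑ u, degw edge w u * piV u) / (∑ u, degw edge w u) with hc
  -- part 1
  have part1 : memX0 edge w x := by
    unfold memX0
    have : ∑ v, degw edge w v * x v
        = (∑ v, degw edge w v * piV v) - (∑ v, degw edge w v) * c := by
      simp [x, mul_sub, Finset.sum_sub_distrib, ← Finset.sum_mul]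
      exact Or.inl hc.symm
    rw [this, hc]
    field_simp
    ring
  -- part 2
  have part2 : ∀ e, eRange edge hne x e ≤ r e := by
    intro e
    have hsup : (edge e).sup' (hne e) x ≤ pip e - c := by
      apply Finset.sup'_le
      intro v hv
      have := h1 e v hv
      simp only [x]
      linarith
    have hinf : pim e - c ≤ (edge e).inf' (hne e) x := by
      apply Finset.le_inf'
      intro v hv
      have := h2 e v hv
      simp only [x]
      linarith
    have := h3 e
    unfold eRange
    linarith
  -- part 3
  have part3 : ∑ v, s v * x v = suppVal edge hne w s r := by
    have : ∑ v, s v * x v = (∑ v, s v * piV v) - (∑ v, s v) * c := by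
      simp [x, mul_sub, Finset.sum_sub_distrib, ← Finset.sum_mul]
      exact Or.inl hc.symm
    rw [this, hs, h4]
    ring
  refine ⟨part1, part2, part3, ?_⟩
  -- part 4 : optimality
  -- uniform bound on feasible solutions via connectivity
  set R : ℝ := ∑ e, r e with hR
  have hRnn : 0 ≤ R := Finset.sum_nonneg (fun e _ => hr e)
  have hrR : ∀ e, r e ≤ R := fun e =>
    Finset.single_le_sum (fun e' _ => hr e') (mem_univ e)
  -- for each pair, there is a bound valid for all feasible y
  have hpb : ∀ u v : V, ∃ B : ℝ, 0 ≤ B ∧ ∀ y : V → ℝ,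
      (∀ e, eRange edge hne y e ≤ r e) → |y v - y u| ≤ B := by
    intro u v
    obtain ⟨k, p, cc, hp0, hpl, hpc⟩ := hconn u v
    refine ⟨(k : ℝ) * R, by positivity, ?_⟩
    intro y hy
    set f : ℕ → ℝ := fun i => if h : i ≤ k then y (p ⟨i, by omega⟩) else 0 with hf
    have hstep : ∀ i < k, |f (i + 1) - f i| ≤ R := by
      intro i hi
      have hi1 : i + 1 ≤ k := hi
      have hi0 : i ≤ k := by omega
      have hmem := hpc ⟨i, hi⟩
      have e1 : f (i + 1) = y (p (Fin.succ ⟨i, hi⟩)) := by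
        simp only [hf, dif_pos hi1]; rfl
      have e0 : f i = y (p (Fin.castSucc ⟨i, hi⟩)) := by
        simp only [hf, dif_pos hi0]; rfl
      rw [e1, e0]
      have hle := hy (cc ⟨i, hi⟩)
      have ha : y (p (Fin.succ ⟨i, hi⟩)) ≤ (edge (cc ⟨i, hi⟩)).sup' (hne _) y :=
        Finset.le_sup' y hmem.2
      have hb : (edge (cc ⟨i, hi⟩)).inf' (hne _) y ≤ y (p (Fin.castSucc ⟨i, hi⟩)) :=
        Finset.inf'_le y hmem.1
      have ha' : y (p (Fin.castSucc ⟨i, hi⟩)) ≤ (edge (cc ⟨i, hi⟩)).sup' (hne _) y :=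
        Finset.le_sup' y hmem.1
      have hb' : (edge (cc ⟨i, hi⟩)).inf' (hne _) y ≤ y (p (Fin.succ ⟨i, hi⟩)) :=
        Finset.inf'_le y hmem.2
      have hrr := hrR (cc ⟨i, hi⟩)
      rw [abs_sub_le_iff]
      unfold eRange at hle
      constructor <;> linarith
    have hfk : f k = y v := by
      simp only [hf, dif_pos (le_refl k)]
      rw [← hpl]; rfl
    have hf0 : f 0 = y u := by
      simp only [hf, dif_pos (Nat.zero_le k)]
      rw [← hp0]; rfl
    have := nat_path_bound f R k hstep
    rwa [hfk, hf0] at this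
  set B : V → V → ℝ := fun u v => (hpb u v).choose with hB
  have hBnn : ∀ u v, 0 ≤ B u v := fun u v => (hpb u v).choose_spec.1
  have hBspec : ∀ u v, ∀ y : V → ℝ,
      (∀ e, eRange edge hne y e ≤ r e) → |y v - y u| ≤ B u v :=
    fun u v => (hpb u v).choose_spec.2
  set M : ℝ := ∑ u : V, ∑ v : V, B u v with hM
  have hMnn : 0 ≤ M :=
    Finset.sum_nonneg fun u _ => Finset.sum_nonneg fun v _ => hBnn u v
  have hBM : ∀ u v, B u v ≤ M := by
    intro u v
    calc B u v ≤ ∑ v', B u v' :=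
          Finset.single_le_sum (fun v' _ => hBnn u v') (mem_univ v)
      _ ≤ M := Finset.single_le_sum
          (f := fun u' => ∑ v', B u' v') (fun u' _ =>
            Finset.sum_nonneg fun v' _ => hBnn u' v') (mem_univ u)
  have pair_bound : ∀ (y : V → ℝ), (∀ e, eRange edge hne y e ≤ r e) →
      ∀ u v, |y v - y u| ≤ M := fun y hy u v => (hBspec u v y hy).trans (hBM u v)
  -- each coordinate of a feasible y is bounded
  have coord_bound : ∀ (y : V → ℝ), memX0 edge w y →
      (∀ e, eRange edge hne y e ≤ r e) → ∀ v, |y v| ≤ M := by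
    intro y hy0 hy v
    have key : (∑ u, degw edge w u) * y v = ∑ u, degw edge w u * (y v - y u) := by
      rw [Finset.sum_mul] at *
      unfold memX0 at hy0
      simp [mul_sub, Finset.sum_sub_distrib, hy0, Finset.sum_mul]
    have habs : |(∑ u, degw edge w u) * y v| ≤ (∑ u, degw edge w u) * M := by
      rw [key]
      calc |∑ u, degw edge w u * (y v - y u)|
          ≤ ∑ u, |degw edge w u * (y v - y u)| := Finset.abs_sum_le_sum_abs _ _
        _ ≤ ∑ u, degw edge w u * M := by
            apply Finset.sum_le_sum
            intro u _
            rw [abs_mul, abs_of_pos (hdpos u)]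
            exact mul_le_mul_of_nonneg_left (pair_bound y hy u v) (le_of_lt (hdpos u))
        _ = (∑ u, degw edge w u) * M := by rw [← Finset.sum_mul]
    rw [abs_mul, abs_of_pos hDpos] at habs
    exact le_of_mul_le_mul_left habs hDpos
  -- the feasible set of objective values is bounded above
  set S := {c : ℝ | ∃ x : V → ℝ, memX0 edge w x ∧
    (∀ e, eRange edge hne x e ≤ r e) ∧ c = ∑ v, s v * x v} with hS
  have hbdd : BddAbove S := by
    refine ⟨∑ v, |s v| * M, ?_⟩
    rintro a ⟨y, hy0, hy, rfl⟩
    apply Finset.sum_le_sum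
    intro v _
    calc s v * y v ≤ |s v * y v| := le_abs_self _
      _ = |s v| * |y v| := abs_mul _ _
      _ ≤ |s v| * M :=
          mul_le_mul_of_nonneg_left (coord_bound y hy0 hy v) (abs_nonneg _)
  intro y hy0 hy
  have hmem : (∑ v, s v * y v) ∈ S := ⟨y, hy0, hy, rfl⟩
  have := le_csSup hbdd hmem
  rw [part3]
  exact this
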